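/- For every integer m ≥ 1 and every integer τ ≥ 0, m² divides ∑_{d ∣ m} μ(m/d) · (−1)^{dτ} · C(d(τ+1) − 1, d − 1), where the sum is over the positive divisors d of m; equivalently, the rational number (1/m²) ∑_{d ∣ m} μ(m/d)(−1)^{dτ} C(d(τ+1)−1, d−1) is an integer. -/

import Mathlib

open Finset Nat

private lemma prod_Ico_add_eq (c k : ℕ) (hk : 1 ≤ k) :
    ∏ j ∈ Ico 1 k, (c + j) = (k - 1)! * Nat.choose (c + k - 1) (k - 1) := by
  obtain ⟨k', rfl⟩ : ∃ k', k = k' + 1 := ⟨k - 1, by omega⟩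
  rw [Finset.prod_Ico_eq_prod_range]
  simp only [Nat.add_sub_cancel]
  have h1 : ∀ i, c + (1 + i) = c + 1 + i := fun i => by ring
  simp only [h1]
  have h2 : ∏ i ∈ range k', (c + 1 + i) = (c+1).ascFactorial k' := by
    induction k' with
    | zero => simp
    | succ n ih => rw [Finset.prod_range_succ, ih (by omega), Nat.ascFactorial_succ]; ring
  rw [h2, Nat.ascFactorial_eq_factorial_mul_choose]
  congr 2

private lemma filter_dvd_eq_image (p n : ℕ) (hp : 0 < p) :
    (Ico 1 (n * p)).filter (fun j => p ∣ j) = (Ico 1 n).image (fun i => p * i) := by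
  ext j
  simp only [mem_filter, mem_Ico, mem_image]
  constructor
  · rintro ⟨⟨h1, h2⟩, i, rfl⟩
    refine ⟨i, ⟨?_, ?_⟩, rfl⟩
    · rcases Nat.eq_zero_or_pos i with rfl | h; · omega
      exact h
    · by_contra h; push_neg at h
      exact absurd h2 (by push_neg; calc n * p ≤ i * p := Nat.mul_le_mul_right p h
                                         _ = p * i := Nat.mul_comm _ _)
  · rintro ⟨i, ⟨h1, h2⟩, rfl⟩
    refine ⟨⟨?_, ?_⟩, ⟨i, rfl⟩⟩
    · exact Nat.one_le_iff_ne_zero.mpr (by positivity)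
    · calc p * i = i * p := Nat.mul_comm _ _
        _ < n * p := (Nat.mul_lt_mul_right hp).mpr h2

private lemma main_identity (p n τ : ℕ) (hp : 0 < p) (hn : 0 < n) :
    (∏ j ∈ (Ico 1 (n*p)).filter (fun j => ¬ p ∣ j), j) * Nat.choose (n*p*(τ+1) - 1) (n*p - 1)
      = (∏ j ∈ (Ico 1 (n*p)).filter (fun j => ¬ p ∣ j), (n*p*τ + j))
          * Nat.choose (n*(τ+1) - 1) (n - 1) := by
  have hN : 1 ≤ n * p := Nat.one_le_iff_ne_zero.mpr (by positivity)
  have F : ∀ c t : ℕ, c = p * t →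
      (∏ j ∈ (Ico 1 (n*p)).filter (fun j => ¬ p ∣ j), (c + j))
          * (p ^ (n-1) * ((n-1)! * Nat.choose (t + n - 1) (n-1)))
        = (n*p - 1)! * Nat.choose (c + n*p - 1) (n*p - 1) := by
    intro c t hc
    rw [← prod_Ico_add_eq c (n*p) hN,
      ← Finset.prod_filter_mul_prod_filter_not (Ico 1 (n*p)) (fun j => p ∣ j) (fun j => c + j)]
    have key : ∏ j ∈ (Ico 1 (n*p)).filter (fun j => p ∣ j), (c + j)
        = p ^ (n-1) * ((n-1)! * Nat.choose (t + n - 1) (n-1)) := by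
      rw [filter_dvd_eq_image p n hp,
        Finset.prod_image (fun a _ b _ h => Nat.eq_of_mul_eq_mul_left hp h)]
      have h2 : ∀ i, c + p * i = p * (t + i) := fun i => by rw [hc]; ring
      simp only [h2]
      rw [Finset.prod_mul_distrib, Finset.prod_const, Nat.card_Ico, prod_Ico_add_eq t n hn]
    rw [key]; ring
  have Fq := F (n*p*τ) (n*τ) (by ring)
  have Fp := F 0 0 (by ring)
  simp only [Nat.zero_add, Nat.choose_self] at Fp Fq
  have e1 : n*p*(τ+1) - 1 = n*p*τ + n*p - 1 := by
    have : n*p*(τ+1) = n*p*τ + n*p := by ring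
    rw [this]
  have e2 : n*(τ+1) - 1 = n*τ + n - 1 := by
    have : n*(τ+1) = n*τ + n := by ring
    rw [this]
  rw [e1, e2]
  have hKpos : 0 < p ^ (n-1) * ((n-1)!) := by positivity
  apply Nat.eq_of_mul_eq_mul_right hKpos
  calc (∏ j ∈ (Ico 1 (n*p)).filter (fun j => ¬ p ∣ j), j)
        * Nat.choose (n*p*τ + n*p - 1) (n*p - 1) * (p ^ (n-1) * ((n-1)!))
      = ((∏ j ∈ (Ico 1 (n*p)).filter (fun j => ¬ p ∣ j), j) * (p ^ (n-1) * ((n-1)! * 1)))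
          * Nat.choose (n*p*τ + n*p - 1) (n*p - 1) := by ring
    _ = ((n*p - 1)! * 1) * Nat.choose (n*p*τ + n*p - 1) (n*p - 1) := by rw [Fp]
    _ = (n*p - 1)! * Nat.choose (n*p*τ + n*p - 1) (n*p - 1) := by ring
    _ = (∏ j ∈ (Ico 1 (n*p)).filter (fun j => ¬ p ∣ j), (n*p*τ + j))
          * (p ^ (n-1) * ((n-1)! * Nat.choose (n*τ + n - 1) (n-1))) := Fq.symm
    _ = (∏ j ∈ (Ico 1 (n*p)).filter (fun j => ¬ p ∣ j), (n*p*τ + j))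
          * Nat.choose (n*τ + n - 1) (n-1) * (p ^ (n-1) * ((n-1)!)) := by ring

private lemma prod_add_expand (c : ℤ) (s : Finset ℕ) :
    ∃ X : ℤ, (∏ j ∈ s, (c + (j:ℤ)))
      = (∏ j ∈ s, (j:ℤ)) + c * (∑ j ∈ s, ∏ k ∈ s.erase j, (k:ℤ)) + c^2 * X := by
  classical
  induction s using Finset.induction_on with
  | empty => exact ⟨0, by simp⟩
  | insert _ _ ha ih =>
    rename_i a s
    obtain ⟨X, hX⟩ := ih
    rw [Finset.prod_insert ha, Finset.prod_insert ha, Finset.sum_insert ha, hX]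
    have h1 : (insert a s).erase a = s := Finset.erase_insert ha
    have h2 : ∀ j ∈ s, (insert a s).erase j = insert a (s.erase j) := fun j hj =>
      Finset.erase_insert_of_ne (fun h => ha (h ▸ hj))
    have h3 : ∑ j ∈ s, ∏ k ∈ (insert a s).erase j, (k:ℤ)
        = ∑ j ∈ s, (a:ℤ) * ∏ k ∈ s.erase j, (k:ℤ) := by
      apply Finset.sum_congr rfl
      intro j hj
      rw [h2 j hj, Finset.prod_insert (fun h => ha (Finset.mem_of_mem_erase h))]
    rw [h1, h3, ← Finset.mul_sum]
    exact ⟨X * c + (a:ℤ) * X + (∑ j ∈ s, ∏ k ∈ s.erase j, (k:ℤ)), by ring⟩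

private lemma pairing_dvd (M : ℕ) :
    ∀ S : Finset ℕ, (∀ j ∈ S, M - j ∈ S) → (∀ j ∈ S, 0 < j ∧ j < M) →
      (∀ j ∈ S, M - j ≠ j) →
      (M:ℤ) ∣ ∑ j ∈ S, ∏ k ∈ S.erase j, (k:ℤ) := by
  intro S
  induction S using Finset.strongInduction with
  | _ S ih =>
    intro hmem hlt hfix
    rcases S.eq_empty_or_nonempty with rfl | ⟨j, hj⟩
    · simp
    · have hjlt := hlt j hj
      set j' := M - j with hj'def
      have hj' : j' ∈ S := hmem j hj
      have hne : j' ≠ j := hfix j hj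
      have hsum : j + j' = M := by omega
      have hj'S : j' ∈ S.erase j := Finset.mem_erase.mpr ⟨hne, hj'⟩
      set S' := (S.erase j).erase j' with hS'def
      have hjS' : j ∉ S' := fun h => (Finset.ne_of_mem_erase (Finset.mem_of_mem_erase h)) rfl
      have hj'S' : j' ∉ S' := fun h => (Finset.ne_of_mem_erase h) rfl
      have hS1 : insert j' S' = S.erase j := Finset.insert_erase hj'S
      have hS : insert j (insert j' S') = S := by rw [hS1]; exact Finset.insert_erase hj
      have hsub : S' ⊆ S := (Finset.erase_subset _ _).trans (Finset.erase_subset _ _)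
      have hssub : S' ⊂ S := (Finset.ssubset_iff_of_subset hsub).mpr ⟨j, hj, hjS'⟩
      have hjins : j ∉ insert j' S' := by
        rw [Finset.mem_insert]; push_neg; exact ⟨fun h => hne h.symm, hjS'⟩
      -- hypotheses for S'
      have hmem' : ∀ k ∈ S', M - k ∈ S' := by
        intro k hk
        have hkS : k ∈ S := hsub hk
        have hklt := hlt k hkS
        have h1 : M - k ∈ S := hmem k hkS
        have hkj' : k ≠ j' := Finset.ne_of_mem_erase hk
        have hkj : k ≠ j := Finset.ne_of_mem_erase (Finset.mem_of_mem_erase hk)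
        rw [hS'def]
        refine Finset.mem_erase.mpr ⟨?_, Finset.mem_erase.mpr ⟨?_, h1⟩⟩
        · omega
        · omega
      have hlt' : ∀ k ∈ S', 0 < k ∧ k < M := fun k hk => hlt k (hsub hk)
      have hfix' : ∀ k ∈ S', M - k ≠ k := fun k hk => hfix k (hsub hk)
      obtain ⟨W, hW⟩ := ih S' hssub hmem' hlt' hfix'
      -- expand the sum
      rw [← hS, Finset.sum_insert hjins, Finset.sum_insert hj'S']
      have e1 : (insert j (insert j' S')).erase j = insert j' S' := Finset.erase_insert hjins
      have e2 : (insert j (insert j' S')).erase j' = insert j S' := by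
        rw [Finset.erase_insert_of_ne (fun h => hne h.symm), Finset.erase_insert hj'S']
      have e3 : ∀ k ∈ S', (insert j (insert j' S')).erase k
          = insert j (insert j' (S'.erase k)) := by
        intro k hk
        have hkj : k ≠ j := fun h => hjS' (h ▸ hk)
        have hkj' : k ≠ j' := fun h => hj'S' (h ▸ hk)
        rw [Finset.erase_insert_of_ne (fun h => hkj h.symm),
          Finset.erase_insert_of_ne (fun h => hkj' h.symm)]
      have e4 : ∑ k ∈ S', ∏ x ∈ (insert j (insert j' S')).erase k, (x:ℤ)
          = (j:ℤ) * (j':ℤ) * ∑ k ∈ S', ∏ x ∈ S'.erase k, (x:ℤ) := by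
        rw [Finset.mul_sum]
        apply Finset.sum_congr rfl
        intro k hk
        have hkj' : k ≠ j' := fun h => hj'S' (h ▸ hk)
        rw [e3 k hk, Finset.prod_insert, Finset.prod_insert]
        · ring
        · exact fun h => hj'S' (Finset.mem_of_mem_erase h)
        · rw [Finset.mem_insert]
          push_neg
          exact ⟨fun h => hne h.symm, fun h => hjS' (Finset.mem_of_mem_erase h)⟩
      rw [e1, e2, e4, hW, Finset.prod_insert hj'S',
        Finset.prod_insert (fun h => hjS' h)]
      have hcast : (j:ℤ) + (j':ℤ) = (M:ℤ) := by exact_mod_cast congrArg (Nat.cast : ℕ → ℤ) hsum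
      refine ⟨(∏ x ∈ S', (x:ℤ)) + (j:ℤ) * (j':ℤ) * W, ?_⟩
      push_cast
      linear_combination (∏ x ∈ S', (x:ℤ)) * hcast

private def Afun (τ d : ℕ) : ℤ := (-1) ^ (d * τ) * (Nat.choose (d * (τ + 1) - 1) (d - 1) : ℤ)

private lemma neg_one_pow_congr_aux (a b : ℕ) (h : a % 2 = b % 2) : (-1:ℤ)^a = (-1)^b := by
  rcases Nat.even_or_odd a with ha | ha
  · rw [ha.neg_one_pow, (Nat.even_iff.mpr (by rw [← h]; exact Nat.even_iff.mp ha)).neg_one_pow]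
  · rw [ha.neg_one_pow, (Nat.odd_iff.mpr (by rw [← h]; exact Nat.odd_iff.mp ha)).neg_one_pow]


private lemma key_congruence (p n τ : ℕ) (hp : p.Prime) (hn : 0 < n) :
    ((p:ℤ)) ^ (2 * (n.factorization p + 1)) ∣ Afun τ (n*p) - Afun τ n := by
  classical
  have hp0 : 0 < p := hp.pos
  have hN : 0 < n * p := by positivity
  set v := n.factorization p with hv
  set S := (Ico 1 (n*p)).filter (fun j => ¬ p ∣ j) with hS
  set c : ℤ := (n:ℤ) * (p:ℤ) * (τ:ℤ) with hc
  set P : ℤ := ∏ j ∈ S, (j:ℤ) with hPdef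
  set T : ℤ := ∑ j ∈ S, ∏ k ∈ S.erase j, (k:ℤ) with hTdef
  set Cb : ℤ := (Nat.choose (n*p*(τ+1) - 1) (n*p - 1) : ℤ) with hCbdef
  set Cs : ℤ := (Nat.choose (n*(τ+1) - 1) (n - 1) : ℤ) with hCsdef
  have hPC : P * Cb = (∏ j ∈ S, (c + (j:ℤ))) * Cs := by
    have h0 := congrArg (Nat.cast : ℕ → ℤ) (main_identity p n τ hp0 hn)
    push_cast at h0
    rw [hPdef, hCbdef, hCsdef, hc]
    push_cast
    convert h0 using 3
  obtain ⟨X, hX⟩ := prod_add_expand c S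
  rw [← hPdef, ← hTdef] at hX
  have hcdvd : (p:ℤ)^(v+1) ∣ c := by
    have h1 : p^(v+1) ∣ n * p := by
      rw [pow_succ]
      exact mul_dvd_mul (Nat.ordProj_dvd n p) dvd_rfl
    have h2 : ((p:ℤ))^(v+1) ∣ (n:ℤ) * (p:ℤ) := by exact_mod_cast Int.natCast_dvd_natCast.mpr h1
    rw [hc]
    exact h2.mul_right _
  have hPnd : ¬ (p:ℤ) ∣ P := by
    intro h
    rw [hPdef, Prime.dvd_finset_prod_iff (Nat.prime_iff_prime_int.mp hp)] at h
    obtain ⟨j, hjS, hdvd⟩ := h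
    rw [Int.natCast_dvd_natCast] at hdvd
    exact (Finset.mem_filter.mp hjS).2 hdvd
  have hcop : IsCoprime ((p:ℤ)^(2*(v+1))) P :=
    (((Nat.prime_iff_prime_int.mp hp).coprime_iff_not_dvd).mpr hPnd).pow_left
  have hmemS : ∀ j ∈ S, n*p - j ∈ S := by
    intro j hj
    rw [hS, Finset.mem_filter, Finset.mem_Ico] at hj ⊢
    obtain ⟨⟨h1, h2⟩, h3⟩ := hj
    refine ⟨⟨by omega, by omega⟩, ?_⟩
    intro hd
    have hpN : p ∣ n*p := dvd_mul_left p n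
    have hj' : p ∣ j := by
      have h4 := Nat.dvd_sub hpN hd
      rwa [Nat.sub_sub_self (le_of_lt h2)] at h4
    exact h3 hj'
  have hltS : ∀ j ∈ S, 0 < j ∧ j < n*p := by
    intro j hj
    rw [hS, Finset.mem_filter, Finset.mem_Ico] at hj
    omega
  suffices hsuf : ((p:ℤ))^(2*(v+1)) ∣ ((-1:ℤ)^(n*p*τ) * (∏ j ∈ S, (c + (j:ℤ))) - (-1)^(n*τ) * P) by
    have h2 : P * (Afun τ (n*p) - Afun τ n)
        = ((-1:ℤ)^(n*p*τ) * (∏ j ∈ S, (c + (j:ℤ))) - (-1)^(n*τ) * P) * Cs := by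
      show P * ((-1:ℤ)^((n*p)*τ) * Cb - (-1:ℤ)^(n*τ) * Cs) = _
      linear_combination ((-1:ℤ)^(n*p*τ)) * hPC
    have h3 : ((p:ℤ))^(2*(v+1)) ∣ P * (Afun τ (n*p) - Afun τ n) := h2 ▸ hsuf.mul_right Cs
    exact hcop.dvd_of_dvd_mul_left h3
  by_cases hcase : p % 2 = 1 ∨ n % 2 = 0
  · -- no fixed points: parity equal
    have hfixS : ∀ j ∈ S, n*p - j ≠ j := by
      intro j hj heq
      obtain ⟨h1, h2⟩ := hltS j hj
      have h3 : ¬ p ∣ j := (Finset.mem_filter.mp hj).2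
      have h2j : 2 * j = n * p := by omega
      rcases hcase with hodd | heven
      · have h6 : p ∣ 2 * j := by rw [h2j]; exact dvd_mul_left p n
        rcases (Nat.Prime.dvd_mul hp).mp h6 with h4 | h4
        · have := Nat.le_of_dvd (by norm_num) h4
          interval_cases p <;> omega
        · exact h3 h4
      · have h5 : p ∣ j := by
          obtain ⟨n', rfl⟩ : ∃ n', n = 2 * n' := ⟨n/2, by omega⟩
          have h8 : 2 * j = 2 * (n' * p) := by rw [h2j]; ring
          have h7 : j = n' * p := by omega
          rw [h7]
          exact dvd_mul_left p n'
        exact h3 h5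
    have hTd : ((p:ℤ))^(v+1) ∣ T := by
      have h1 := pairing_dvd (n*p) S hmemS hltS hfixS
      rw [← hTdef] at h1
      refine dvd_trans ?_ h1
      exact_mod_cast Int.natCast_dvd_natCast.mpr (by rw [pow_succ]; exact mul_dvd_mul (Nat.ordProj_dvd n p) dvd_rfl)
    have hpar : (-1:ℤ)^(n*p*τ) = (-1)^(n*τ) := by
      apply neg_one_pow_congr_aux
      have e1 := Nat.mul_mod (n*τ) p 2
      have e2 : n*p*τ = n*τ*p := by ring
      have e3 := Nat.mul_mod n τ 2
      rcases hcase with hodd | heven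
      · rw [e2, e1, hodd]; omega
      · rw [e2, e1, e3, heven]; simp
    rw [hpar, ← mul_sub, hX]
    have hQP : P + c * T + c^2 * X - P = c * T + c * (c * X) := by ring
    rw [hQP]
    have hD : ((p:ℤ))^(2*(v+1)) = (p:ℤ)^(v+1) * (p:ℤ)^(v+1) := by rw [← pow_add]; ring_nf
    refine Dvd.dvd.mul_left ?_ _
    rw [hD]
    exact dvd_add (mul_dvd_mul hcdvd hTd) (mul_dvd_mul hcdvd (hcdvd.mul_right X))
  · push_neg at hcase
    obtain ⟨hp2', hnodd⟩ := hcase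
    have hp2 : p = 2 := by
      have := hp.two_le
      rcases Nat.even_or_odd p with he | ho
      · obtain ⟨r, hr⟩ := he
        have : p % 2 = 0 := by omega
        have h2p : 2 ∣ p := by omega
        exact ((Nat.prime_dvd_prime_iff_eq Nat.prime_two hp).mp h2p).symm
      · exact absurd (Nat.odd_iff.mp ho) hp2'
    subst hp2
    have hv0 : v = 0 := by
      rw [hv]
      exact Nat.factorization_eq_zero_of_not_dvd (by omega)
    rw [hv0]
    norm_num
    have hn1 : n % 2 = 1 := by omega
    have h2par : (-1:ℤ)^(n*τ) = (-1)^τ := by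
      apply neg_one_pow_congr_aux
      rw [Nat.mul_mod, hn1, one_mul]
      omega
    have hPodd : Odd P := by
      rw [← Int.not_even_iff_odd]
      intro he
      exact hPnd (by exact_mod_cast he.two_dvd)
    have hcard : S.card = n := by
      have h1 := Finset.card_filter_add_card_filter_not
        (s := Ico 1 (n*2)) (p := fun j => 2 ∣ j)
      rw [filter_dvd_eq_image 2 n (by norm_num),
        Finset.card_image_of_injective _ (fun a b h => by omega), ← hS,
        Nat.card_Ico, Nat.card_Ico] at h1
      omega
    have hTodd : Odd T := by
      have hone : ((T : ℤ) : ZMod 2) = 1 := by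
        rw [hTdef]
        push_cast
        have hprod : ∀ j ∈ S, ∏ k ∈ S.erase j, ((k:ℕ) : ZMod 2) = 1 := by
          intro j hj
          apply Finset.prod_eq_one
          intro k hk
          have hkS : k ∈ S := Finset.mem_of_mem_erase hk
          have hodd : ¬ 2 ∣ k := (Finset.mem_filter.mp hkS).2
          have hk2 : k % 2 = 1 := by omega
          rw [← ZMod.natCast_mod, hk2, Nat.cast_one]
        rw [Finset.sum_congr rfl hprod, Finset.sum_const, hcard]
        simp only [nsmul_eq_mul, mul_one]
        rw [← ZMod.natCast_mod, hn1, Nat.cast_one]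
      have hnd : ¬ (2:ℤ) ∣ T := by
        intro hd
        have hd2 : ((2:ℕ):ℤ) ∣ T := by exact_mod_cast hd
        rw [← ZMod.intCast_zmod_eq_zero_iff_dvd T 2] at hd2
        rw [hone] at hd2
        exact one_ne_zero hd2
      rw [Int.odd_iff]
      have := Int.emod_two_eq T
      rcases this with h | h
      · exact absurd (Int.dvd_of_emod_eq_zero h) hnd
      · exact h
    obtain ⟨a, ha⟩ := hPodd
    obtain ⟨b, hb⟩ := hTodd
    have hez : (n:ℤ) = 2*(n/2 : ℕ)+1 := by
      have h9 : n = 2*(n/2)+1 := by omega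
      exact_mod_cast congrArg (Nat.cast : ℕ → ℤ) h9
    rw [h2par, hX, hc]
    rcases Nat.even_or_odd τ with hev | hod
    · obtain ⟨f, hf⟩ := hev
      have hfz : (τ:ℤ) = (f:ℤ) + (f:ℤ) := by exact_mod_cast congrArg (Nat.cast : ℕ → ℤ) hf
      rw [(Even.neg_one_pow (α := ℤ) ⟨f, hf⟩), hfz]
      refine ⟨(n:ℤ)*(f:ℤ)*T + 4*(n:ℤ)^2*(f:ℤ)^2*X, ?_⟩
      push_cast
      ring_nf
      rw [show (-1:ℤ)^(n*τ*2) = 1 from Even.neg_one_pow ⟨n*τ, by ring⟩]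
      ring
    · obtain ⟨f, hf⟩ := hod
      have hfz : (τ:ℤ) = 2*(f:ℤ) + 1 := by exact_mod_cast congrArg (Nat.cast : ℕ → ℤ) hf
      rw [(Odd.neg_one_pow (α := ℤ) ⟨f, hf⟩), hfz, ha, hb, hez]
      set e : ℤ := ((n/2 : ℕ) : ℤ)
      refine ⟨a + (4*e*(f:ℤ)*b+2*e*b+2*(f:ℤ)*b+b+2*e*(f:ℤ)+e+(f:ℤ)) + 1
        + (2*e+1)^2*(2*(f:ℤ)+1)^2*X, ?_⟩
      push_cast
      ring_nf
      rw [show (-1:ℤ)^(n*τ*2) = 1 from Even.neg_one_pow ⟨n*τ, by ring⟩]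
      ring

private lemma prime_pow_dvd (m τ p : ℕ) (hm : m ≠ 0) (hp : p.Prime) (hpm : p ∣ m) :
    (p:ℤ) ^ (2 * m.factorization p) ∣
      ∑ e ∈ m.divisors, (ArithmeticFunction.moebius e : ℤ) * Afun τ (m / e) := by
  classical
  set a := m.factorization p with hadef
  have ha : 1 ≤ a := hp.factorization_pos_of_dvd hm hpm
  set D := m.divisors.filter Squarefree with hD
  have h0 : ∑ e ∈ m.divisors, (ArithmeticFunction.moebius e : ℤ) * Afun τ (m / e)
      = ∑ e ∈ D, (ArithmeticFunction.moebius e : ℤ) * Afun τ (m / e) := by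
    rw [hD]
    rw [Finset.sum_filter_of_ne]
    intro e _ hne
    by_contra hsq
    rw [ArithmeticFunction.moebius_eq_zero_of_not_squarefree hsq] at hne
    simp at hne
  rw [h0, ← Finset.sum_filter_add_sum_filter_not D (fun e => p ∣ e)]
  have hbij : ∑ e ∈ D.filter (fun e => p ∣ e), (ArithmeticFunction.moebius e : ℤ) * Afun τ (m / e)
      = ∑ e ∈ D.filter (fun e => ¬ p ∣ e),
          (ArithmeticFunction.moebius (e * p) : ℤ) * Afun τ (m / (e * p)) := by
    apply Finset.sum_bij' (fun e _ => e / p) (fun e _ => e * p)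
    · intro e he
      rw [hD, Finset.mem_filter, Finset.mem_filter, Nat.mem_divisors] at he ⊢
      obtain ⟨⟨⟨hdvd, _⟩, hsq⟩, hpe⟩ := he
      have hp0 : 0 < p := hp.pos
      refine ⟨⟨⟨(Nat.div_dvd_of_dvd hpe).trans hdvd, hm⟩, hsq.squarefree_of_dvd (Nat.div_dvd_of_dvd hpe)⟩, ?_⟩
      intro hpd
      obtain ⟨k, hk⟩ := hpe
      rw [hk, Nat.mul_div_cancel_left k hp0] at hpd
      have : p * p ∣ e := by
        obtain ⟨l, hl⟩ := hpd
        exact ⟨l, by rw [hk, hl]; ring⟩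
      exact Irreducible.not_isUnit hp (hsq p this)
    · intro e he
      rw [hD, Finset.mem_filter, Finset.mem_filter, Nat.mem_divisors] at he ⊢
      obtain ⟨⟨⟨hdvd, _⟩, hsq⟩, hpe⟩ := he
      have hcop : Nat.Coprime e p := Nat.Coprime.symm ((Nat.Prime.coprime_iff_not_dvd hp).mpr hpe)
      refine ⟨⟨⟨hcop.mul_dvd_of_dvd_of_dvd hdvd hpm, hm⟩, ?_⟩, dvd_mul_left p e⟩
      · rw [Nat.squarefree_mul hcop]
        exact ⟨hsq, hp.squarefree⟩
    · intro e he
      rw [hD, Finset.mem_filter, Finset.mem_filter] at he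
      exact Nat.div_mul_cancel he.2
    · intro e he
      exact Nat.mul_div_cancel e hp.pos
    · intro e he
      rw [hD, Finset.mem_filter, Finset.mem_filter] at he
      rw [Nat.div_mul_cancel he.2]
  rw [hbij, ← Finset.sum_add_distrib]
  apply Finset.dvd_sum
  intro e he
  rw [hD, Finset.mem_filter, Finset.mem_filter, Nat.mem_divisors] at he
  obtain ⟨⟨⟨hdvd, _⟩, hsq⟩, hpe⟩ := he
  have hcop : Nat.Coprime e p := Nat.Coprime.symm ((Nat.Prime.coprime_iff_not_dvd hp).mpr hpe)
  have hmu : (ArithmeticFunction.moebius (e * p) : ℤ)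
      = -(ArithmeticFunction.moebius e : ℤ) := by
    rw [ArithmeticFunction.isMultiplicative_moebius.map_mul_of_coprime hcop,
      ArithmeticFunction.moebius_apply_prime hp]
    ring
  rw [hmu]
  have hepm : e * p ∣ m := hcop.mul_dvd_of_dvd_of_dvd hdvd hpm
  obtain ⟨k, hk⟩ := hepm
  have he0 : e ≠ 0 := by rintro rfl; simp at hk; omega
  have hk0 : k ≠ 0 := by rintro rfl; simp at hk; exact hm hk
  have hme : m / e = k * p := by
    rw [hk]
    have h9 : e * p * k = e * (k * p) := by ring
    rw [h9, Nat.mul_div_cancel_left _ (Nat.pos_of_ne_zero he0)]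
  have hmep : m / (e * p) = k := by
    rw [hk, Nat.mul_div_cancel_left _ (Nat.mul_pos (Nat.pos_of_ne_zero he0) hp.pos)]
  have hkfac : k.factorization p = a - 1 := by
    have h9 : m.factorization p = e.factorization p + p.factorization p + k.factorization p := by
      rw [hk, Nat.factorization_mul (Nat.mul_ne_zero he0 hp.pos.ne') hk0,
        Nat.factorization_mul he0 hp.ne_zero]
      simp
    rw [Nat.factorization_eq_zero_of_not_dvd hpe, hp.factorization_self] at h9
    omega
  have hkey := key_congruence p k τ hp (Nat.pos_of_ne_zero hk0)
  rw [hkfac] at hkey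
  have hexp : a - 1 + 1 = a := by omega
  rw [hexp] at hkey
  rw [hme, hmep]
  obtain ⟨w, hw⟩ := hkey
  exact ⟨(ArithmeticFunction.moebius e : ℤ) * w,
    by linear_combination (ArithmeticFunction.moebius e : ℤ) * hw⟩

theorem sq_dvd_moebius_sum (m τ : ℕ) (hm : 1 ≤ m) :
    (m : ℤ) ^ 2 ∣
      ∑ d ∈ m.divisors, (ArithmeticFunction.moebius (m / d)) *
        (-1 : ℤ) ^ (d * τ) * Nat.choose (d * (τ + 1) - 1) (d - 1) := by
  classical
  have hm0 : m ≠ 0 := by omega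
  have hstep : ∑ d ∈ m.divisors, (ArithmeticFunction.moebius (m / d) : ℤ) *
        (-1 : ℤ) ^ (d * τ) * (Nat.choose (d * (τ + 1) - 1) (d - 1) : ℤ)
      = ∑ e ∈ m.divisors, (ArithmeticFunction.moebius e : ℤ) * Afun τ (m / e) := by
    have h1 : ∀ d, (ArithmeticFunction.moebius (m / d) : ℤ) * (-1 : ℤ) ^ (d * τ)
        * (Nat.choose (d * (τ + 1) - 1) (d - 1) : ℤ)
        = (ArithmeticFunction.moebius (m / d) : ℤ) * Afun τ d := fun d => by
      unfold Afun; ring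
    rw [Finset.sum_congr rfl (fun d _ => h1 d),
      ← Nat.sum_div_divisors m (fun d => (ArithmeticFunction.moebius (m / d) : ℤ) * Afun τ d)]
    apply Finset.sum_congr rfl
    intro d hd
    rw [Nat.div_div_self (Nat.mem_divisors.mp hd).1 hm0]
  rw [hstep]
  have hprod : ∏ p ∈ m.primeFactors, p ^ m.factorization p = m := by
    have h := Nat.factorization_prod_pow_eq_self hm0
    rwa [Finsupp.prod, Nat.support_factorization] at h
  have hfac : (m:ℤ)^2 = ∏ p ∈ m.primeFactors, (p:ℤ)^(2 * m.factorization p) := by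
    conv_lhs => rw [← hprod]
    push_cast
    rw [← Finset.prod_pow]
    apply Finset.prod_congr rfl
    intro p _
    rw [← pow_mul, mul_comm (m.factorization p) 2]
  rw [hfac]
  apply Finset.prod_dvd_of_coprime
  · intro p hpmem q hqmem hne
    have hp := Nat.prime_of_mem_primeFactors (by exact_mod_cast hpmem)
    have hq := Nat.prime_of_mem_primeFactors (by exact_mod_cast hqmem)
    exact (Nat.isCoprime_iff_coprime.mpr ((Nat.coprime_primes hp hq).mpr hne)).pow
  · intro p hpmem
    exact prime_pow_dvd m τ p hm0 (Nat.prime_of_mem_primeFactors hpmem)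
      (Nat.dvd_of_mem_primeFactors hpmem)
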